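/- Let j : ℝ⁴ → ℝ⁴ be the orthogonal complex structure j(x,y,z,w) = (−z, w, x, −y), and let f : ℝ⁴ → ℝ⁴ be f(x,y,z,w) = j(x,y,z,w) + (x² − y², −2xy, 0, 0) = (−z + x² − y², w − 2xy, x, −y). Then p = (x,y,z,w) is a J₀-complex point of the graph Γ_f (i.e. Df(p) ∘ Df(p) = −id) if and only if x = 0 and y = 0. Hence the set of J₀-complex points of Γ_f is the 2-plane {(0, 0, z, w) : z, w ∈ ℝ}. -/

import Mathlib

/-!
STATEMENT 13: With `j(x,y,z,w) = (−z, w, x, −y)` and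
`f(x,y,z,w) = j(x,y,z,w) + (x² − y², −2xy, 0, 0) = (−z + x² − y², w − 2xy, x, −y)`,
a point `p = (x,y,z,w)` is a `J₀`-complex point of `Γ_f`
(i.e. `Df(p) ∘ Df(p) = −id`) iff `x = 0` and `y = 0`; hence the set of
`J₀`-complex points of `Γ_f` is the 2-plane `{(0,0,z,w)}`.
-/

open scoped RealInnerProductSpace

noncomputable section

abbrev E4 : Type := EuclideanSpace ℝ (Fin 4)

noncomputable def mk4 (a b c d : ℝ) : E4 := (WithLp.equiv 2 (Fin 4 → ℝ)).symm ![a, b, c, d]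

/-- `f(x,y,z,w) = (−z + x² − y², w − 2xy, x, −y)` -/
noncomputable def f13 : E4 → E4 := fun p =>
  mk4 (-(p 2) + (p 0) ^ 2 - (p 1) ^ 2) (p 3 - 2 * p 0 * p 1) (p 0) (-(p 1))

/-- Coordinate projections on the plain product. -/
noncomputable abbrev pr (i : Fin 4) : (Fin 4 → ℝ) →L[ℝ] ℝ :=
  ContinuousLinearMap.proj (R := ℝ) (φ := fun _ : Fin 4 => ℝ) i

/-- The Jacobian of `f13` at a point with first two coordinates `a`, `b`. -/
noncomputable def Lg (a b : ℝ) : (Fin 4 → ℝ) →L[ℝ] (Fin 4 → ℝ) :=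
  ContinuousLinearMap.pi
    ![(2*a) • pr 0 - (2*b) • pr 1 - pr 2,
      -((2*b) • pr 0) - (2*a) • pr 1 + pr 3,
      pr 0,
      -pr 1]

lemma Lg_apply (a b : ℝ) (v : Fin 4 → ℝ) :
    Lg a b v = ![2*a*v 0 - 2*b*v 1 - v 2, -(2*b*v 0) - 2*a*v 1 + v 3, v 0, -v 1] := by
  funext i
  fin_cases i <;>
    simp [Lg, ContinuousLinearMap.pi_apply, ContinuousLinearMap.proj_apply]

def e4 : E4 ≃L[ℝ] (Fin 4 → ℝ) := PiLp.continuousLinearEquiv 2 ℝ _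

noncomputable def D13 (p : E4) : E4 →L[ℝ] E4 :=
  ((e4.symm : (Fin 4 → ℝ) →L[ℝ] E4).comp (Lg (p 0) (p 1))).comp (e4 : E4 →L[ℝ] (Fin 4 → ℝ))

noncomputable def g13 : (Fin 4 → ℝ) → (Fin 4 → ℝ) := fun p =>
  ![-(p 2) + (p 0) ^ 2 - (p 1) ^ 2, p 3 - 2 * p 0 * p 1, p 0, -(p 1)]

lemma hasFDerivAt_g13 (v : Fin 4 → ℝ) : HasFDerivAt g13 (Lg (v 0) (v 1)) v := by
  rw [hasFDerivAt_pi']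
  have h0 : HasFDerivAt (fun x : Fin 4 → ℝ => x 0) (pr 0) v := (pr 0).hasFDerivAt
  have h1 : HasFDerivAt (fun x : Fin 4 → ℝ => x 1) (pr 1) v := (pr 1).hasFDerivAt
  have h2 : HasFDerivAt (fun x : Fin 4 → ℝ => x 2) (pr 2) v := (pr 2).hasFDerivAt
  have h3 : HasFDerivAt (fun x : Fin 4 → ℝ => x 3) (pr 3) v := (pr 3).hasFDerivAt
  intro i
  rw [Lg, ContinuousLinearMap.proj_pi]
  fin_cases i
  · have := (h2.neg.add (h0.mul h0)).sub (h1.mul h1)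
    convert this using 1
    · funext x; simp [g13]; ring
    · ext w; simp; ring
  · have := h3.sub ((h0.mul h1).const_mul 2)
    convert this using 1
    · funext x; simp [g13]; ring
    · ext w; simp; ring
  · exact h0
  · exact h1.neg

lemma hasFDerivAt_f13 (p : E4) : HasFDerivAt f13 (D13 p) p := by
  have h : HasFDerivAt (⇑e4.symm ∘ g13 ∘ ⇑e4) (D13 p) p :=
    (e4.symm.hasFDerivAt).comp p ((hasFDerivAt_g13 (e4 p)).comp p e4.hasFDerivAt)
  convert h using 1
  funext x; rfl

lemma fderiv_f13 (p : E4) : fderiv ℝ f13 p = D13 p := (hasFDerivAt_f13 p).fderiv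

lemma mul_apply' (p : E4) (v : E4) :
    (D13 p * D13 p) v = e4.symm (Lg (p 0) (p 1) (Lg (p 0) (p 1) (e4 v))) := by
  simp [D13, ContinuousLinearMap.mul_apply, ContinuousLinearMap.comp_apply]

lemma key_iff (p : E4) : D13 p * D13 p = -1 ↔ (p 0 = 0 ∧ p 1 = 0) := by
  constructor
  · intro h
    have hv := DFunLike.congr_fun h (mk4 1 0 0 0)
    rw [mul_apply'] at hv
    have h0 := congrFun (congrArg (fun q : E4 => (q : Fin 4 → ℝ)) hv) 0
    simp [Lg_apply, mk4, e4] at h0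
    constructor <;> nlinarith [sq_nonneg (p 0), sq_nonneg (p 1), h0]
  · rintro ⟨ha, hb⟩
    refine ContinuousLinearMap.ext fun v => ?_
    rw [mul_apply', ha, hb]
    ext i
    fin_cases i <;> simp [Lg_apply, e4]

theorem stmt_13 :
    (∀ p : E4, fderiv ℝ f13 p * fderiv ℝ f13 p = -1 ↔ (p 0 = 0 ∧ p 1 = 0)) ∧
    {p : E4 | fderiv ℝ f13 p * fderiv ℝ f13 p = -1} =
      {p : E4 | ∃ z w : ℝ, p = mk4 0 0 z w} := by
  have main : ∀ p : E4, fderiv ℝ f13 p * fderiv ℝ f13 p = -1 ↔ (p 0 = 0 ∧ p 1 = 0) := by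
    intro p
    rw [fderiv_f13]
    exact key_iff p
  refine ⟨main, ?_⟩
  ext p
  simp only [Set.mem_setOf_eq, main p]
  constructor
  · rintro ⟨h0, h1⟩
    refine ⟨p 2, p 3, ?_⟩
    ext i
    fin_cases i <;> simp [mk4, h0, h1]
  · rintro ⟨z, w, rfl⟩
    constructor <;> simp [mk4]

end
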